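/- Let {ε_{n,m} : n, m ∈ ℕ} be pairwise distinct positive rationals whose sum (over all pairs) is finite, and define h : ℕ^ℕ → ℝ by h(x) = Σ_n ε_{n, x(n)}. Then h is a graph homomorphism from the infinite-breadth Hamming graph to the Vitali equivalence relation: whenever x, y ∈ ℕ^ℕ differ in exactly one coordinate, h(x) ≠ h(y) and h(x) − h(y) is rational. -/

import Mathlib

theorem hamming_to_vitali_homomorphism
    (ε : ℕ → ℕ → ℚ)
    (hpos : ∀ n m, 0 < ε n m)
    (hinj : ∀ n m n' m', ε n m = ε n' m' → n = n' ∧ m = m')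
    (hsum : Summable (fun p : ℕ × ℕ => ((ε p.1 p.2 : ℝ))))
    (h : (ℕ → ℕ) → ℝ)
    (hh : ∀ x : ℕ → ℕ, h x = ∑' n, ((ε n (x n) : ℝ))) :
    ∀ x y : ℕ → ℕ, (∃! n, x n ≠ y n) →
      h x ≠ h y ∧ ∃ q : ℚ, h x - h y = (q : ℝ) := by
  intro x y ⟨n₀, hn₀, huniq⟩
  have hsx : Summable (fun n : ℕ => ((ε n (x n) : ℝ))) := by
    have : Function.Injective (fun n : ℕ => (n, x n)) := fun a b hab => by
      simpa using congrArg Prod.fst hab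
    simpa [Function.comp_def] using hsum.comp_injective this
  have hsy : Summable (fun n : ℕ => ((ε n (y n) : ℝ))) := by
    have : Function.Injective (fun n : ℕ => (n, y n)) := fun a b hab => by
      simpa using congrArg Prod.fst hab
    simpa [Function.comp_def] using hsum.comp_injective this
  have hdiff : h x - h y = ((ε n₀ (x n₀) : ℝ)) - (ε n₀ (y n₀) : ℝ) := by
    rw [hh, hh, ← Summable.tsum_sub hsx hsy]
    rw [tsum_eq_single n₀]
    intro b hb
    have : x b = y b := by
      by_contra hxy
      exact hb (huniq b hxy)
    rw [this]; ring
  constructor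
  · intro heq
    have : (ε n₀ (x n₀) : ℝ) = (ε n₀ (y n₀) : ℝ) := by
      have := hdiff; rw [heq] at this; linarith
    have : ε n₀ (x n₀) = ε n₀ (y n₀) := by exact_mod_cast this
    exact hn₀ (hinj _ _ _ _ this).2
  · exact ⟨ε n₀ (x n₀) - ε n₀ (y n₀), by rw [hdiff]; push_cast; ring⟩
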